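/- Let A be an affine subspace of R^n, a ∈ A, and let W ⊆ R^n be a Borel set invariant under every transformation y ↦ δ(y − a*) + a** with δ ≠ 0 and a*, a** ∈ A (the group G(A)). Then for every symmetric positive definite n×n matrix Σ and all σ, τ ∈ (0, ∞) and all a', a'' ∈ A, one has P_{a', σ²Σ}(W) = P_{a'', τ²Σ}(W), i.e., the Gaussian rejection probability of W does not depend on the scale σ nor on the choice of mean within A. -/

import Mathlib

open Matrix MeasureTheory
open scoped ENNReal

/-- The Gaussian measure `N(μ, S)` on `ℝⁿ`, defined through its Lebesgue density. -/
noncomputable def gaussianMeasure {n : ℕ} (μ : Fin n → ℝ) (S : Matrix (Fin n) (Fin n) ℝ) :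
    Measure (Fin n → ℝ) :=
  volume.withDensity fun y =>
    ENNReal.ofReal (Real.sqrt (((2 * Real.pi) ^ n * S.det)⁻¹) *
      Real.exp (-(1 / 2) * ((y - μ) ⬝ᵥ S⁻¹.mulVec (y - μ))))

lemma gaussDensity_measurable {n : ℕ} (μ : Fin n → ℝ) (S : Matrix (Fin n) (Fin n) ℝ) :
    Measurable (fun y : Fin n → ℝ =>
      ENNReal.ofReal (Real.sqrt (((2 * Real.pi) ^ n * S.det)⁻¹) *
        Real.exp (-(1 / 2) * ((y - μ) ⬝ᵥ S⁻¹.mulVec (y - μ))))) := by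
  apply Measurable.ennreal_ofReal
  apply Measurable.const_mul
  apply Real.measurable_exp.comp
  apply Measurable.const_mul
  simp only [dotProduct, mulVec, Pi.sub_apply]
  exact Finset.measurable_sum _ fun i _ =>
    ((measurable_pi_apply i).sub measurable_const).mul
      (Finset.measurable_sum _ fun j _ => measurable_const.mul
        ((measurable_pi_apply j).sub measurable_const))

lemma sqrt_det_smul {n : ℕ} (S : Matrix (Fin n) (Fin n) ℝ) (σ : ℝ) (hσ : 0 < σ) :
    Real.sqrt (((2 * Real.pi) ^ n * (σ ^ 2 • S).det)⁻¹)
      = (σ ^ n)⁻¹ * Real.sqrt (((2 * Real.pi) ^ n * S.det)⁻¹) := by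
  have hdet : (σ ^ 2 • S).det = (σ ^ 2) ^ n * S.det := by
    rw [Matrix.det_smul]; simp
  rw [hdet]
  have h2 : ((2 * Real.pi) ^ n * ((σ ^ 2) ^ n * S.det))⁻¹
      = ((σ ^ n)⁻¹) ^ 2 * ((2 * Real.pi) ^ n * S.det)⁻¹ := by
    rw [mul_inv, mul_inv]
    have : ((σ ^ 2) ^ n)⁻¹ = ((σ ^ n)⁻¹) ^ 2 := by
      rw [← pow_mul, ← inv_pow, ← inv_pow, ← pow_mul, mul_comm 2 n]
    rw [this]; ring
  rw [h2, Real.sqrt_mul (sq_nonneg _), Real.sqrt_sq (by positivity)]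

theorem stmt_10 {n : ℕ} (a : Fin n → ℝ) (V : Submodule ℝ (Fin n → ℝ))
    (A : Set (Fin n → ℝ)) (hA : A = {x | x - a ∈ V})
    (W : Set (Fin n → ℝ)) (hW : MeasurableSet W)
    (hinv : ∀ (δ : ℝ), δ ≠ 0 → ∀ a₁ ∈ A, ∀ a₂ ∈ A, ∀ y : Fin n → ℝ,
      (δ • (y - a₁) + a₂ ∈ W ↔ y ∈ W)) :
    ∀ (S : Matrix (Fin n) (Fin n) ℝ), S.PosDef →
      ∀ (σ τ : ℝ), 0 < σ → 0 < τ → ∀ a' ∈ A, ∀ a'' ∈ A,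
        gaussianMeasure a' (σ ^ 2 • S) W = gaussianMeasure a'' (τ ^ 2 • S) W := by
  intro S hS σ τ hσ hτ a' ha' a'' ha''
  have hc : (0:ℝ) < σ / τ := div_pos hσ hτ
  set c : ℝ := σ / τ with hcdef
  have hc0 : c ≠ 0 := ne_of_gt hc
  set T : (Fin n → ℝ) → (Fin n → ℝ) := fun y => c • (y - a'') + a' with hT
  -- T preimage of W is W
  have hWpre : T ⁻¹' W = W := by
    ext y; exact hinv c hc0 a'' ha'' a' ha' y
  have hTmeas : Measurable T :=
    ((measurable_id.sub measurable_const).const_smul c).add measurable_const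
  -- pushforward of volume
  have hmap : Measure.map T volume
      = ENNReal.ofReal ((c ^ n)⁻¹) • (volume : Measure (Fin n → ℝ)) := by
    have e1 : T = (fun z : Fin n → ℝ => z + a') ∘ (fun z : Fin n → ℝ => c • z)
        ∘ (fun z : Fin n → ℝ => z + (-a'')) := by
      funext y; simp [hT, sub_eq_add_neg]
    rw [e1, ← Function.comp_assoc]
    rw [← Measure.map_map ((measurable_add_const a').comp (measurable_const_smul c))
      (measurable_add_const (-a''))]
    rw [map_add_right_eq_self volume (-a'')]
    rw [← Measure.map_map (measurable_add_const a') (measurable_const_smul c)]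
    rw [Measure.map_addHaar_smul volume hc0, Measure.map_smul,
      map_add_right_eq_self volume a']
    congr 1
    rw [Module.finrank_fintype_fun_eq_card, Fintype.card_fin, abs_of_pos (by positivity)]
  set f₁ : (Fin n → ℝ) → ℝ≥0∞ := fun y =>
    ENNReal.ofReal (Real.sqrt (((2 * Real.pi) ^ n * (σ ^ 2 • S).det)⁻¹) *
      Real.exp (-(1 / 2) * ((y - a') ⬝ᵥ (σ ^ 2 • S)⁻¹.mulVec (y - a')))) with hf₁def
  set f₂ : (Fin n → ℝ) → ℝ≥0∞ := fun y =>
    ENNReal.ofReal (Real.sqrt (((2 * Real.pi) ^ n * (τ ^ 2 • S).det)⁻¹) *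
      Real.exp (-(1 / 2) * ((y - a'') ⬝ᵥ (τ ^ 2 • S)⁻¹.mulVec (y - a'')))) with hf₂def
  have hf₁ : Measurable f₁ := gaussDensity_measurable a' (σ ^ 2 • S)
  -- matrix facts
  have hdetS : IsUnit S.det := isUnit_iff_ne_zero.mpr (ne_of_gt hS.det_pos)
  have hsmulinv : ∀ r : ℝ, 0 < r → (r ^ 2 • S)⁻¹ = (r ^ 2)⁻¹ • S⁻¹ := by
    intro r hr
    apply Matrix.inv_eq_right_inv
    rw [Matrix.smul_mul, Matrix.mul_smul, Matrix.mul_nonsing_inv S hdetS, smul_smul,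
      mul_inv_cancel₀ (by positivity), one_smul]
  have hinvσ : (σ ^ 2 • S)⁻¹ = (σ ^ 2)⁻¹ • S⁻¹ := hsmulinv σ hσ
  have hinvτ : (τ ^ 2 • S)⁻¹ = (τ ^ 2)⁻¹ • S⁻¹ := hsmulinv τ hτ
  -- pointwise identity
  have hpt : ∀ x : Fin n → ℝ, ENNReal.ofReal (c ^ n) * f₁ (T x) = f₂ x := by
    intro x
    have hTx : T x - a' = c • (x - a'') := by simp [hT]
    set q : ℝ := (x - a'') ⬝ᵥ S⁻¹.mulVec (x - a'') with hq
    have hquadσ : (T x - a') ⬝ᵥ (σ ^ 2 • S)⁻¹.mulVec (T x - a') = (τ ^ 2)⁻¹ * q := by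
      rw [hTx, hinvσ, Matrix.smul_mulVec, Matrix.mulVec_smul, smul_dotProduct,
        dotProduct_smul, dotProduct_smul, smul_eq_mul, smul_eq_mul, smul_eq_mul, hq]
      rw [hcdef]
      field_simp
    have hquadτ : (x - a'') ⬝ᵥ (τ ^ 2 • S)⁻¹.mulVec (x - a'') = (τ ^ 2)⁻¹ * q := by
      rw [hinvτ, Matrix.smul_mulVec, dotProduct_smul, smul_eq_mul, hq]
    rw [hf₁def, hf₂def]
    simp only [hquadσ, hquadτ, sqrt_det_smul S σ hσ, sqrt_det_smul S τ hτ]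
    rw [← ENNReal.ofReal_mul (by positivity)]
    congr 1
    have hcn : c ^ n * (σ ^ n)⁻¹ = (τ ^ n)⁻¹ := by
      rw [hcdef, div_pow]
      field_simp
    rw [← mul_assoc, ← mul_assoc, hcn]
  -- main computation
  have key : ∫⁻ y in W, f₁ y ∂(Measure.map T volume) = ∫⁻ x in W, f₁ (T x) ∂volume := by
    rw [setLIntegral_map hW hf₁ hTmeas, hWpre]
  rw [hmap] at key
  have hcn1 : ENNReal.ofReal (c ^ n) * ENNReal.ofReal ((c ^ n)⁻¹) = 1 := by
    rw [← ENNReal.ofReal_mul (by positivity), mul_inv_cancel₀ (by positivity),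
      ENNReal.ofReal_one]
  rw [gaussianMeasure, gaussianMeasure, withDensity_apply _ hW, withDensity_apply _ hW]
  show ∫⁻ y in W, f₁ y ∂volume = ∫⁻ y in W, f₂ y ∂volume
  calc ∫⁻ y in W, f₁ y ∂volume
      = ENNReal.ofReal (c ^ n) * (ENNReal.ofReal ((c ^ n)⁻¹) * ∫⁻ y in W, f₁ y ∂volume) := by
        rw [← mul_assoc, hcn1, one_mul]
    _ = ENNReal.ofReal (c ^ n) * ∫⁻ x in W, f₁ (T x) ∂volume := by
        rw [← key, Measure.restrict_smul, lintegral_smul_measure, smul_eq_mul]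
    _ = ∫⁻ x in W, ENNReal.ofReal (c ^ n) * f₁ (T x) ∂volume := by
        rw [← lintegral_const_mul _ (show Measurable fun x => f₁ (T x) from hf₁.comp hTmeas)]
    _ = ∫⁻ x in W, f₂ x ∂volume := by
        simp only [hpt]
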